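/- Let C be a convex market model. Then A(C) is closed in probability (in the product topology of convergence in probability on adapted processes) if and only if A_T(C) is closed in probability in L^0. -/

import Mathlib

open MeasureTheory Finset Filter Topology
open scoped ENNReal

private lemma tele_sum {α : Type*} [AddCommGroup α] (f : ℕ → α) (N : ℕ) :
    ∑ t ∈ range (N + 1), (f t - (if t = 0 then 0 else f (t - 1))) = f N := by
  induction N with
  | zero => simp
  | succ N ih => rw [Finset.sum_range_succ, ih]; simp

private lemma sum_pred_sub {α : Type*} [AddCommGroup α] (D : ℕ → α) (t : ℕ) :
    (∑ s ∈ range (t + 1), D s) - (if t = 0 then 0 else ∑ s ∈ range ((t - 1) + 1), D s) = D t := by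
  rcases Nat.eq_zero_or_pos t with rfl | ht
  · simp
  · have h : t - 1 + 1 = t := by omega
    rw [if_neg (by omega), h, Finset.sum_range_succ]
    abel

private lemma tim_const {Ω E : Type*} [MeasurableSpace Ω] [PseudoMetricSpace E]
    {μ : Measure Ω} (f : Ω → E) : TendstoInMeasure μ (fun _ : ℕ => f) atTop f := by
  intro ε hε
  have h : {ω | ε ≤ edist (f ω) (f ω)} = (∅ : Set Ω) := by
    ext ω
    simp only [Set.mem_setOf_eq, edist_self, Set.mem_empty_iff_false, iff_false, not_le]
    exact hε
  simp only [h, measure_empty]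
  exact tendsto_const_nhds

private lemma tim_add {Ω E : Type*} [MeasurableSpace Ω] [SeminormedAddCommGroup E]
    {μ : Measure Ω} {f f' : ℕ → Ω → E} {g g' : Ω → E}
    (h : TendstoInMeasure μ f atTop g) (h' : TendstoInMeasure μ f' atTop g') :
    TendstoInMeasure μ (fun n ω => f n ω + f' n ω) atTop (fun ω => g ω + g' ω) := by
  intro ε hε
  have hsub : ∀ n, {ω | ε ≤ edist (f n ω + f' n ω) (g ω + g' ω)} ⊆
      {ω | ε / 2 ≤ edist (f n ω) (g ω)} ∪ {ω | ε / 2 ≤ edist (f' n ω) (g' ω)} := by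
    intro n ω hω
    by_contra hcon
    simp only [Set.mem_union, Set.mem_setOf_eq, not_or, not_le] at hcon
    have hlt : edist (f n ω + f' n ω) (g ω + g' ω) < ε := by
      calc edist (f n ω + f' n ω) (g ω + g' ω)
          ≤ edist (f n ω) (g ω) + edist (f' n ω) (g' ω) := edist_add_add_le _ _ _ _
        _ < ε / 2 + ε / 2 := ENNReal.add_lt_add hcon.1 hcon.2
        _ = ε := ENNReal.add_halves ε
    exact absurd hω (not_le.2 hlt)
  have h1 := h (ε / 2) (ENNReal.half_pos hε.ne')
  have h2 := h' (ε / 2) (ENNReal.half_pos hε.ne')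
  have hadd : Tendsto (fun n => μ {ω | ε / 2 ≤ edist (f n ω) (g ω)} +
      μ {ω | ε / 2 ≤ edist (f' n ω) (g' ω)}) atTop (𝓝 0) := by
    simpa using h1.add h2
  refine tendsto_of_tendsto_of_tendsto_of_le_of_le tendsto_const_nhds hadd
    (fun n => zero_le) (fun n => ?_)
  exact le_trans (measure_mono (hsub n)) (measure_union_le _ _)

private lemma tim_sum {Ω E : Type*} [MeasurableSpace Ω] [SeminormedAddCommGroup E]
    {μ : Measure Ω} (s : Finset ℕ) (f : ℕ → ℕ → Ω → E) (g : ℕ → Ω → E)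
    (h : ∀ t ∈ s, TendstoInMeasure μ (fun n => f n t) atTop (g t)) :
    TendstoInMeasure μ (fun n ω => ∑ t ∈ s, f n t ω) atTop (fun ω => ∑ t ∈ s, g t ω) := by
  classical
  induction s using Finset.induction with
  | empty => simpa using tim_const (fun _ : Ω => (0 : E))
  | @insert a s has ih =>
      have := tim_add (h a (Finset.mem_insert_self a s))
        (ih (fun t ht => h t (Finset.mem_insert_of_mem ht)))
      simpa only [Finset.sum_insert has] using this

private lemma exists_meas_limit {Ω : Type*} (m : MeasurableSpace Ω) {d : ℕ}
    (S : ℕ → Ω → (Fin d → ℝ)) (hS : ∀ k, Measurable[m] (S k)) :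
    ∃ g' : Ω → (Fin d → ℝ), Measurable[m] g' ∧
      ∀ ω, (∃ l, Tendsto (fun k => S k ω) atTop (𝓝 l)) →
        Tendsto (fun k => S k ω) atTop (𝓝 (g' ω)) := by
  letI := m
  classical
  set Conv := {ω | ∃ l, Tendsto (fun k => S k ω) atTop (𝓝 l)} with hConvdef
  have hConv : MeasurableSet Conv := measurableSet_exists_tendsto hS
  set h : ℕ → Ω → (Fin d → ℝ) := fun k ω => if ω ∈ Conv then S k ω else 0 with hh
  have hhm : ∀ k, Measurable (h k) := fun k => Measurable.ite hConv (hS k) measurable_const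
  have hex : ∀ ω, ∃ l, Tendsto (fun k => h k ω) atTop (𝓝 l) := by
    intro ω
    by_cases hω : ω ∈ Conv
    · obtain ⟨l, hl⟩ := id hω
      refine ⟨l, ?_⟩
      have heq : (fun k => h k ω) = fun k => S k ω := by
        funext k; simp only [hh, if_pos hω]
      rw [heq]; exact hl
    · exact ⟨0, by simp [hh, hω, tendsto_const_nhds]⟩
  set g' : Ω → (Fin d → ℝ) := fun ω => limUnder atTop (fun k => h k ω) with hg'
  have hpt : ∀ ω, Tendsto (fun k => h k ω) atTop (𝓝 (g' ω)) := fun ω =>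
    tendsto_nhds_limUnder (hex ω)
  refine ⟨g', measurable_of_tendsto_metrizable' atTop hhm (tendsto_pi_nhds.2 hpt), ?_⟩
  intro ω hω
  have hmem : ω ∈ Conv := hω
  have heq : (fun k => S k ω) = fun k => h k ω := by
    funext k; simp only [hh, if_pos hmem]
  rw [heq]; exact hpt ω

theorem A_closed_iff_AT_closed {Ω : Type*} [m0 : MeasurableSpace Ω]
    (P : Measure Ω) [IsProbabilityMeasure P] (d T : ℕ)
    (F : ℕ → MeasurableSpace Ω) (hF : ∀ t, F t ≤ m0) (hmono : ∀ s t, s ≤ t → F s ≤ F t)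
    (C : ℕ → Ω → Set (Fin d → ℝ))
    (hCneg : ∀ t, ∀ ω, {v : Fin d → ℝ | ∀ i, v i ≤ 0} ⊆ C t ω)
    (hCclosed : ∀ t ω, IsClosed (C t ω)) (hCconv : ∀ t ω, Convex ℝ (C t ω)) :
    -- A(C) sequentially closed in probability (componentwise), on adapted processes
    ((∀ (cseq : ℕ → ℕ → Ω → Fin d → ℝ) (c : ℕ → Ω → Fin d → ℝ),
        (∀ n t, Measurable[F t] (cseq n t)) → (∀ t, Measurable[F t] (c t)) →
        (∀ n, ∃ x : ℕ → Ω → Fin d → ℝ, (∀ t, Measurable[F t] (x t)) ∧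
          (∀ᵐ ω ∂P, x T ω = 0) ∧
          (∀ t ≤ T, ∀ᵐ ω ∂P,
            x t ω - (if t = 0 then 0 else x (t - 1) ω) + cseq n t ω ∈ C t ω)) →
        (∀ t ≤ T, TendstoInMeasure P (fun n => cseq n t) atTop (c t)) →
        (∃ x : ℕ → Ω → Fin d → ℝ, (∀ t, Measurable[F t] (x t)) ∧
          (∀ᵐ ω ∂P, x T ω = 0) ∧
          (∀ t ≤ T, ∀ᵐ ω ∂P,
            x t ω - (if t = 0 then 0 else x (t - 1) ω) + c t ω ∈ C t ω))) ↔
    -- A_T(C) sequentially closed in probability in L⁰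
      (∀ (gseq : ℕ → Ω → Fin d → ℝ) (g : Ω → Fin d → ℝ),
        (∀ n, Measurable (gseq n)) → Measurable g →
        (∀ n, ∃ w : ℕ → Ω → Fin d → ℝ, (∀ t, Measurable[F t] (w t)) ∧
          (∀ t ≤ T, ∀ᵐ ω ∂P, w t ω ∈ C t ω) ∧
          (∀ᵐ ω ∂P, gseq n ω = ∑ t ∈ range (T + 1), w t ω)) →
        TendstoInMeasure P gseq atTop g →
        (∃ w : ℕ → Ω → Fin d → ℝ, (∀ t, Measurable[F t] (w t)) ∧
          (∀ t ≤ T, ∀ᵐ ω ∂P, w t ω ∈ C t ω) ∧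
          (∀ᵐ ω ∂P, g ω = ∑ t ∈ range (T + 1), w t ω)))) := by
  constructor
  · -- A closed → A_T closed
    intro hA gseq g hgseqm hgm hmem hconv
    choose w hw1 hw2 hw3 using hmem
    set S : ℕ → Ω → (Fin d → ℝ) := fun n ω => ∑ t ∈ range (T + 1), w n t ω with hSdef
    have hSmeas : ∀ n, Measurable[F T] (S n) := by
      intro n
      exact Finset.measurable_sum _ fun t ht =>
        (hw1 n t).mono (hmono t T (Nat.lt_succ_iff.1 (mem_range.1 ht))) le_rfl
    have hSconv : TendstoInMeasure P S atTop g :=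
      TendstoInMeasure.congr (fun n => hw3 n) EventuallyEq.rfl hconv
    obtain ⟨ns, hns_mono, hns⟩ := hSconv.exists_seq_tendsto_ae
    obtain ⟨g', hg'meas, hg'lim⟩ :=
      exists_meas_limit (F T) (fun k => S (ns k)) fun k => hSmeas (ns k)
    have hgg' : g' =ᵐ[P] g := by
      filter_upwards [hns] with ω hω
      exact tendsto_nhds_unique (hg'lim ω ⟨g ω, hω⟩) hω
    -- the claim processes
    set cseq' : ℕ → ℕ → Ω → Fin d → ℝ := fun n t ω => if t = T then S n ω else 0 with hcseq'
    set c' : ℕ → Ω → Fin d → ℝ := fun t ω => if t = T then g' ω else 0 with hc'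
    have hcseq'm : ∀ n t, Measurable[F t] (cseq' n t) := by
      intro n t
      rcases eq_or_ne t T with rfl | h
      · simpa [hcseq'] using hSmeas n
      · simp only [hcseq', if_neg h]; exact measurable_const
    have hc'm : ∀ t, Measurable[F t] (c' t) := by
      intro t
      rcases eq_or_ne t T with rfl | h
      · simpa [hc'] using hg'meas
      · simp only [hc', if_neg h]; exact measurable_const
    have hsum_cseq' : ∀ n ω, ∑ s ∈ range (T + 1), cseq' n s ω = S n ω := by
      intro n ω
      simp only [hcseq']
      rw [Finset.sum_ite_eq' (range (T + 1)) T (fun _ => S n ω)]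
      simp [Finset.self_mem_range_succ]
    have hhedge : ∀ n, ∃ x : ℕ → Ω → Fin d → ℝ, (∀ t, Measurable[F t] (x t)) ∧
        (∀ᵐ ω ∂P, x T ω = 0) ∧
        (∀ t ≤ T, ∀ᵐ ω ∂P,
          x t ω - (if t = 0 then 0 else x (t - 1) ω) + cseq' n t ω ∈ C t ω) := by
      intro n
      refine ⟨fun t ω => ∑ s ∈ range (t + 1), (w n s ω - cseq' n s ω), ?_, ?_, ?_⟩
      · intro t
        refine Finset.measurable_sum _ fun s hs => ?_
        have hst : s ≤ t := Nat.lt_succ_iff.1 (mem_range.1 hs)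
        exact ((hw1 n s).mono (hmono s t hst) le_rfl).sub
          ((hcseq'm n s).mono (hmono s t hst) le_rfl)
      · refine Eventually.of_forall fun ω => ?_
        show ∑ s ∈ range (T + 1), (w n s ω - cseq' n s ω) = 0
        rw [Finset.sum_sub_distrib, hsum_cseq' n ω]
        simp [hSdef]
      · intro t ht
        filter_upwards [hw2 n t ht] with ω hω
        have key : (∑ s ∈ range (t + 1), (w n s ω - cseq' n s ω)) -
            (if t = 0 then 0 else ∑ s ∈ range ((t - 1) + 1), (w n s ω - cseq' n s ω)) +
            cseq' n t ω = w n t ω := by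
          rw [sum_pred_sub (fun s => w n s ω - cseq' n s ω) t]
          abel
        show (∑ s ∈ range (t + 1), (w n s ω - cseq' n s ω)) -
            (if t = 0 then 0 else ∑ s ∈ range ((t - 1) + 1), (w n s ω - cseq' n s ω)) +
            cseq' n t ω ∈ C t ω
        rw [key]
        exact hω
    have hconv' : ∀ t ≤ T, TendstoInMeasure P (fun n => cseq' n t) atTop (c' t) := by
      intro t ht
      rcases eq_or_ne t T with rfl | h
      · have : TendstoInMeasure P S atTop g' := hSconv.congr_right hgg'.symm
        simpa [hcseq', hc'] using this
      · simp only [hcseq', hc', if_neg h]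
        exact tim_const _
    obtain ⟨x, hx1, hx2, hx3⟩ := hA cseq' c' hcseq'm hc'm hhedge hconv'
    refine ⟨fun t ω => x t ω - (if t = 0 then 0 else x (t - 1) ω) + c' t ω, ?_, ?_, ?_⟩
    · intro t
      have h1 : Measurable[F t] fun ω => (if t = 0 then 0 else x (t - 1) ω) := by
        rcases eq_or_ne t 0 with rfl | h
        · simp only [if_pos rfl]; exact measurable_const
        · simp only [if_neg h]
          exact (hx1 (t - 1)).mono (hmono (t - 1) t (by omega)) le_rfl
      have h2 : Measurable[F t] (c' t) := hc'm t
      exact ((hx1 t).sub h1).add h2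
    · intro t ht
      filter_upwards [hx3 t ht] with ω hω
      exact hω
    · filter_upwards [hx2, hgg'] with ω hxT hg'ω
      have hsplit : ∑ t ∈ range (T + 1),
          (x t ω - (if t = 0 then 0 else x (t - 1) ω) + c' t ω) =
          (∑ t ∈ range (T + 1), (x t ω - (if t = 0 then 0 else x (t - 1) ω))) +
          ∑ t ∈ range (T + 1), c' t ω := by
        rw [Finset.sum_add_distrib]
      have htel : ∑ t ∈ range (T + 1), (x t ω - (if t = 0 then 0 else x (t - 1) ω)) = x T ω :=
        tele_sum (fun t => x t ω) T
      have hcsum : ∑ t ∈ range (T + 1), c' t ω = g' ω := by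
        simp only [hc']
        rw [Finset.sum_ite_eq' (range (T + 1)) T (fun _ => g' ω)]
        simp [Finset.self_mem_range_succ]
      rw [hsplit, htel, hcsum, hxT, hg'ω]
      simp
  · -- A_T closed → A closed
    intro hAT cseq c hcm hcm' hhedge hconv
    choose x hx1 hx2 hx3 using hhedge
    set gseq : ℕ → Ω → Fin d → ℝ := fun n ω => ∑ t ∈ range (T + 1), cseq n t ω with hgseqdef
    set g : Ω → Fin d → ℝ := fun ω => ∑ t ∈ range (T + 1), c t ω with hgdef
    have hgseqm : ∀ n, Measurable (gseq n) := fun n =>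
      Finset.measurable_sum _ fun t _ => (hcm n t).mono (hF t) le_rfl
    have hgm : Measurable g :=
      Finset.measurable_sum _ fun t _ => (hcm' t).mono (hF t) le_rfl
    have hconv' : TendstoInMeasure P gseq atTop g :=
      tim_sum (range (T + 1)) (fun n t => cseq n t) (fun t => c t)
        fun t ht => hconv t (Nat.lt_succ_iff.1 (mem_range.1 ht))
    have hmem : ∀ n, ∃ w : ℕ → Ω → Fin d → ℝ, (∀ t, Measurable[F t] (w t)) ∧
        (∀ t ≤ T, ∀ᵐ ω ∂P, w t ω ∈ C t ω) ∧
        (∀ᵐ ω ∂P, gseq n ω = ∑ t ∈ range (T + 1), w t ω) := by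
      intro n
      refine ⟨fun t ω => x n t ω - (if t = 0 then 0 else x n (t - 1) ω) + cseq n t ω,
        ?_, ?_, ?_⟩
      · intro t
        have h1 : Measurable[F t] fun ω => (if t = 0 then 0 else x n (t - 1) ω) := by
          rcases eq_or_ne t 0 with rfl | h
          · simp only [if_pos rfl]; exact measurable_const
          · simp only [if_neg h]
            exact (hx1 n (t - 1)).mono (hmono (t - 1) t (by omega)) le_rfl
        exact ((hx1 n t).sub h1).add (hcm n t)
      · exact fun t ht => hx3 n t ht
      · filter_upwards [hx2 n] with ω hxT
        have hsplit : ∑ t ∈ range (T + 1),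
            (x n t ω - (if t = 0 then 0 else x n (t - 1) ω) + cseq n t ω) =
            (∑ t ∈ range (T + 1), (x n t ω - (if t = 0 then 0 else x n (t - 1) ω))) +
            ∑ t ∈ range (T + 1), cseq n t ω := by
          rw [Finset.sum_add_distrib]
        rw [hsplit, tele_sum (fun t => x n t ω) T, hxT]
        simp [hgseqdef]
    obtain ⟨w, hw1, hw2, hw3⟩ := hAT gseq g hgseqm hgm hmem hconv'
    refine ⟨fun t ω => ∑ s ∈ range (t + 1), (w s ω - c s ω), ?_, ?_, ?_⟩
    · intro t
      refine Finset.measurable_sum _ fun s hs => ?_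
      have hst : s ≤ t := Nat.lt_succ_iff.1 (mem_range.1 hs)
      exact ((hw1 s).mono (hmono s t hst) le_rfl).sub ((hcm' s).mono (hmono s t hst) le_rfl)
    · filter_upwards [hw3] with ω hω
      rw [Finset.sum_sub_distrib, ← hω]
      simp [hgdef]
    · intro t ht
      filter_upwards [hw2 t ht] with ω hω
      have key : (∑ s ∈ range (t + 1), (w s ω - c s ω)) -
          (if t = 0 then 0 else ∑ s ∈ range ((t - 1) + 1), (w s ω - c s ω)) +
          c t ω = w t ω := by
        rw [sum_pred_sub (fun s => w s ω - c s ω) t]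
        abel
      show (∑ s ∈ range (t + 1), (w s ω - c s ω)) -
          (if t = 0 then 0 else ∑ s ∈ range ((t - 1) + 1), (w s ω - c s ω)) +
          c t ω ∈ C t ω
      rw [key]
      exact hω
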